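/- arXiv:2310.09844 — 2 statements merged into one kernel-verified Lean document; each statement's English description precedes it below -/
import Mathlib

section
/- Lower bound. Fix ν ∈ ℕ and suppose δ, δ^ν ∈ (ε,∞] and: (a) the risk measure ℛ₀ is real-valued, monotone, and convex; (b) h^ν(F,G) = 0 whenever F and G are constant mappings; (c) there exist σ^ν, κ₀ ∈ [0,∞) such that for all (x,y) ∈ C one has |ψ₀(ξ,x,y) − ψ₀(ξ',x,y)| ≤ κ₀‖ξ − ξ'‖₂ for all ξ,ξ' ∈ Ξ and |ψ₀^ν(ξ,x,y) − ψ₀(ξ,x,y)| ≤ σ^ν for all ξ ∈ Ξ; (d) F + a ∈ ℱ for every F ∈ ℱ and a ∈ ℝ^n, G + b ∈ 𝒢 for every G ∈ 𝒢 and b ∈ ℝ^m, and both ℱ and 𝒢 contain their respective zero mappings. If 𝔪^ν is the infimum value of the training problem (TP)^ν without the risk constraints ℛ_k(·) ≤ 0, k = 1,...,q, then, as an inequality in the extended reals, 𝔪^ν − σ^ν − κ₀·diam Ξ ≤ inf_{(x,y)∈C} ψ₀(ξ,x,y) for every ξ ∈ Ξ. -/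
open Filter Finset

/-- The multivariate Heaviside function. -/
noncomputable def Heav {s : ℕ} (v : EuclideanSpace ℝ (Fin s)) : EuclideanSpace ℝ (Fin s) :=
  WithLp.toLp 2 (fun i => if v i ≤ 0 then (0 : ℝ) else 1)

/-- The set `D_ε(δ) = ([−δ,−ε] ∪ [ε,δ])^m`, with `δ` possibly infinite. -/
def Dset (m : ℕ) (ε : ℝ) (δ : EReal) : Set (EuclideanSpace ℝ (Fin m)) :=
  {g | ∀ i, ε ≤ |g i| ∧ ((|g i| : ℝ) : EReal) ≤ δ}

/-- Lower bound.  The infimum value `𝔪^ν` of the training problem `(TP)^ν`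
without risk constraints satisfies `𝔪^ν − σ^ν − κ₀·diam Ξ ≤ inf_{(x,y)∈C} ψ₀(ξ,x,y)` for
every `ξ ∈ Ξ`, as an inequality in the extended reals. -/
theorem training_lower_bound
    {r n m : ℕ} {Ω : Type} [Fintype Ω] [Nonempty Ω]
    (P : Ω → ℝ) (hP : ∀ ω, 0 < P ω) (hPsum : ∑ ω, P ω = 1)
    (ψ0 ψ0ν : EuclideanSpace ℝ (Fin r) → EuclideanSpace ℝ (Fin n) →
      EuclideanSpace ℝ (Fin m) → ℝ)
    (hψ0cont : Continuous fun p : EuclideanSpace ℝ (Fin r) × EuclideanSpace ℝ (Fin n) ×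
      EuclideanSpace ℝ (Fin m) => ψ0 p.1 p.2.1 p.2.2)
    (hψ0νcont : Continuous fun p : EuclideanSpace ℝ (Fin r) × EuclideanSpace ℝ (Fin n) ×
      EuclideanSpace ℝ (Fin m) => ψ0ν p.1 p.2.1 p.2.2)
    (C : Set (EuclideanSpace ℝ (Fin n) × EuclideanSpace ℝ (Fin m)))
    (hCne : C.Nonempty) (hCcl : IsClosed C)
    (hCbin : ∀ p ∈ C, ∀ i, p.2 i = 0 ∨ p.2 i = 1)
    (Ξ : Set (EuclideanSpace ℝ (Fin r))) (hΞcomp : IsCompact Ξ)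
    (ξν : Ω → EuclideanSpace ℝ (Fin r)) (hξν : ∀ ω, ξν ω ∈ Ξ)
    (ℱ : Set (EuclideanSpace ℝ (Fin r) → EuclideanSpace ℝ (Fin n)))
    (𝒢 : Set (EuclideanSpace ℝ (Fin r) → EuclideanSpace ℝ (Fin m)))
    (hℱcont : ∀ F ∈ ℱ, ContinuousOn F Ξ) (h𝒢cont : ∀ G ∈ 𝒢, ContinuousOn G Ξ)
    -- (a) ℛ₀ real-valued, monotone, convex
    (R0 : (Ω → ℝ) → ℝ)
    (hR0const : ∀ c : ℝ, R0 (fun _ => c) = c)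
    (hR0mono : ∀ η η' : Ω → ℝ, (∀ ω, η ω ≤ η' ω) → R0 η ≤ R0 η')
    (hR0convex : ∀ l : ℝ, 0 ≤ l → l ≤ 1 → ∀ η η' : Ω → ℝ,
      R0 (fun ω => (1 - l) * η ω + l * η' ω) ≤ (1 - l) * R0 η + l * R0 η')
    -- (b) regularizer vanishes on constant mappings
    (hν : (EuclideanSpace ℝ (Fin r) → EuclideanSpace ℝ (Fin n)) →
      (EuclideanSpace ℝ (Fin r) → EuclideanSpace ℝ (Fin m)) → ℝ)
    (hhν_nonneg : ∀ F G, 0 ≤ hν F G)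
    (hhν_const : ∀ F G, (∀ ζ ∈ Ξ, ∀ ζ' ∈ Ξ, F ζ = F ζ') →
      (∀ ζ ∈ Ξ, ∀ ζ' ∈ Ξ, G ζ = G ζ') → hν F G = 0)
    (ε : ℝ) (hε : 0 < ε)
    (δ δν : EReal) (hδ : (ε : EReal) < δ) (hδν : (ε : EReal) < δν)
    -- (c) Lipschitz and approximation bounds
    (σν κ0 : ℝ) (hσν : 0 ≤ σν) (hκ0 : 0 ≤ κ0)
    (hLip : ∀ x y, (x, y) ∈ C → ∀ ξ ∈ Ξ, ∀ ξ' ∈ Ξ,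
      |ψ0 ξ x y - ψ0 ξ' x y| ≤ κ0 * dist ξ ξ')
    (happrox : ∀ x y, (x, y) ∈ C → ∀ ξ ∈ Ξ, |ψ0ν ξ x y - ψ0 ξ x y| ≤ σν)
    -- (d) translation closure and zero mappings
    (hshiftF : ∀ F ∈ ℱ, ∀ a : EuclideanSpace ℝ (Fin n), (fun ζ => F ζ + a) ∈ ℱ)
    (hshiftG : ∀ G ∈ 𝒢, ∀ b : EuclideanSpace ℝ (Fin m), (fun ζ => G ζ + b) ∈ 𝒢)
    (hzeroF : (fun _ => (0 : EuclideanSpace ℝ (Fin n))) ∈ ℱ)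
    (hzeroG : (fun _ => (0 : EuclideanSpace ℝ (Fin m))) ∈ 𝒢) :
    ∀ ξ ∈ Ξ,
      sInf {v : EReal | ∃ F ∈ ℱ, ∃ G ∈ 𝒢,
          (∀ ω, (F (ξν ω), Heav (G (ξν ω))) ∈ C) ∧
          (∀ ω, G (ξν ω) ∈ Dset m ε δν) ∧
          v = ((R0 (fun ω => ψ0ν (ξν ω) (F (ξν ω)) (Heav (G (ξν ω)))) + hν F G : ℝ) : EReal)}
        - ((σν + κ0 * Metric.diam Ξ : ℝ) : EReal) ≤
      sInf {v : EReal | ∃ x y, (x, y) ∈ C ∧ v = ((ψ0 ξ x y : ℝ) : EReal)} := by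

  intro ξ hξ
  set c : ℝ := σν + κ0 * Metric.diam Ξ with hc
  apply le_sInf
  rintro v ⟨x, y, hxy, rfl⟩
  -- construct constant feasible point
  set b : EuclideanSpace ℝ (Fin m) := WithLp.toLp 2 (fun i => if y i = 0 then -ε else ε) with hb
  have hFmem : (fun ζ : EuclideanSpace ℝ (Fin r) =>
      (fun _ : EuclideanSpace ℝ (Fin r) => (0 : EuclideanSpace ℝ (Fin n))) ζ + x) ∈ ℱ :=
    hshiftF _ hzeroF x
  have hGmem : (fun ζ : EuclideanSpace ℝ (Fin r) =>
      (fun _ : EuclideanSpace ℝ (Fin r) => (0 : EuclideanSpace ℝ (Fin m))) ζ + b) ∈ 𝒢 :=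
    hshiftG _ hzeroG b
  have hHb : Heav b = y := by
    ext i
    rcases hCbin _ hxy i with h0 | h1
    · have h0' : y i = 0 := h0
      simp [Heav, hb, h0', neg_nonpos.mpr hε.le]
    · have h1' : y i = 1 := h1
      have hne : y i ≠ 0 := by rw [h1']; norm_num
      simp [Heav, hb, hne, h1', not_le.mpr hε]
  have hvmem : (((R0 (fun ω => ψ0ν (ξν ω) x y)) : ℝ) : EReal) ∈
      {v : EReal | ∃ F ∈ ℱ, ∃ G ∈ 𝒢,
          (∀ ω, (F (ξν ω), Heav (G (ξν ω))) ∈ C) ∧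
          (∀ ω, G (ξν ω) ∈ Dset m ε δν) ∧
          v = ((R0 (fun ω => ψ0ν (ξν ω) (F (ξν ω)) (Heav (G (ξν ω)))) + hν F G : ℝ) : EReal)} := by
    refine ⟨_, hFmem, _, hGmem, ?_, ?_, ?_⟩
    · intro ω; simpa [zero_add, hHb] using hxy
    · intro ω i
      have habs : |b i| = ε := by
        simp only [hb]
        rcases hCbin _ hxy i with h0 | h1
        · have h0' : y i = 0 := h0
          simp [h0', abs_of_pos hε]
        · have h1' : y i = 1 := h1
          have hne : y i ≠ 0 := by rw [h1']; norm_num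
          simp [hne, abs_of_pos hε]
      constructor
      · simp [zero_add, habs]
      · simp only [zero_add, habs]; exact hδν.le
    · have h0 : hν (fun ζ => (fun _ => (0 : EuclideanSpace ℝ (Fin n))) ζ + x)
          (fun ζ => (fun _ => (0 : EuclideanSpace ℝ (Fin m))) ζ + b) = 0 :=
        hhν_const _ _ (fun _ _ _ _ => rfl) (fun _ _ _ _ => rfl)
      simp only [zero_add] at h0 ⊢
      simp [hHb, h0]
  -- pointwise bound
  have hpt : ∀ ω, ψ0ν (ξν ω) x y ≤ ψ0 ξ x y + c := by
    intro ω
    have h1 : ψ0ν (ξν ω) x y - ψ0 (ξν ω) x y ≤ σν :=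
      (abs_le.mp (happrox x y hxy _ (hξν ω))).2
    have h2 : ψ0 (ξν ω) x y - ψ0 ξ x y ≤ κ0 * dist (ξν ω) ξ :=
      (abs_le.mp (hLip x y hxy _ (hξν ω) _ hξ)).2
    have h3 : dist (ξν ω) ξ ≤ Metric.diam Ξ :=
      Metric.dist_le_diam_of_mem hΞcomp.isBounded (hξν ω) hξ
    have h4 : κ0 * dist (ξν ω) ξ ≤ κ0 * Metric.diam Ξ :=
      mul_le_mul_of_nonneg_left h3 hκ0
    simp only [hc]
    linarith
  have hR : R0 (fun ω => ψ0ν (ξν ω) x y) ≤ ψ0 ξ x y + c := by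
    calc R0 (fun ω => ψ0ν (ξν ω) x y) ≤ R0 (fun _ => ψ0 ξ x y + c) :=
          hR0mono _ _ hpt
      _ = ψ0 ξ x y + c := hR0const _
  have hinf : sInf {v : EReal | ∃ F ∈ ℱ, ∃ G ∈ 𝒢,
          (∀ ω, (F (ξν ω), Heav (G (ξν ω))) ∈ C) ∧
          (∀ ω, G (ξν ω) ∈ Dset m ε δν) ∧
          v = ((R0 (fun ω => ψ0ν (ξν ω) (F (ξν ω)) (Heav (G (ξν ω)))) + hν F G : ℝ) : EReal)}
        ≤ ((ψ0 ξ x y + c : ℝ) : EReal) := by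
    refine le_trans (sInf_le hvmem) ?_
    exact_mod_cast hR
  calc _ ≤ ((ψ0 ξ x y + c : ℝ) : EReal) - ((c : ℝ) : EReal) :=
        EReal.sub_le_sub hinf le_rfl
    _ = ((ψ0 ξ x y : ℝ) : EReal) := by
        rw [← EReal.coe_sub]; norm_num
end

section
/- Decision rule guarantee for direct use of a trained rule. Fix ν ∈ ℕ, suppose δ, δ^ν ∈ (ε,∞], τ^ν ∈ [0,∞), (F^ν,G^ν) is a τ^ν-minimizer of the training problem (TP)^ν without the risk constraints, and the following hold: (a) ℛ₀ is real-valued, monotone, and convex; (b) h^ν(F,G) = 0 whenever F and G are constant mappings; (c) there exist σ^ν, κ₀ ∈ [0,∞) with |ψ₀(ξ,x,y) − ψ₀(ξ',x,y)| ≤ κ₀‖ξ − ξ'‖₂ and |ψ₀^ν(ξ,x,y) − ψ₀(ξ,x,y)| ≤ σ^ν for all ξ,ξ' ∈ Ξ and (x,y) ∈ C; (d) ℱ and 𝒢 are closed under addition of constants and contain their zero mappings. Suppose further λ, κ₀' ∈ [0,∞) satisfy ‖F^ν(ξ'') − F^ν(ξ')‖₂ ≤ λ‖ξ'' − ξ'‖₂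 for all ξ'',ξ' ∈ Ξ, and |ψ₀(ξ'',x'',y) − ψ₀(ξ',x',y)| ≤ κ₀'·√(‖ξ''−ξ'‖₂² + ‖x''−x'‖₂²) for all ξ'',ξ' ∈ Ξ and (x'',y),(x',y) ∈ C. Then for every ξ ∈ Ξ such that (F^ν(ξ), ℍ(G^ν(ξ))) ∈ C and ℍ(G^ν(ξ)) = ℍ(G^ν(ξ^ν(ω))) for all ω ∈ Ω, one has: the infimum inf_{(x,y)∈C} ψ₀(ξ,x,y) is finite and ψ₀(ξ, F^ν(ξ), ℍ(G^ν(ξ))) ≤ inf_{(x,y)∈C} ψ₀(ξ,x,y) + 2σ^ν + τ^ν + (κ₀ + κ₀'·√(1+λ²))·diam Ξ. -/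
open Filter Finset

/-- Decision rule guarantee for direct use of a trained rule `(F^ν,G^ν)`:
at every `ξ ∈ Ξ` where the prescribed decision lies in `C` and the binary prescription
agrees with the one at every training point, the decision is
`(2σ^ν + τ^ν + (κ₀ + κ₀'·√(1+λ²))·diam Ξ)`-suboptimal. -/
theorem direct_rule_guarantee
    {r n m : ℕ} {Ω : Type} [Fintype Ω] [Nonempty Ω]
    (P : Ω → ℝ) (hP : ∀ ω, 0 < P ω) (hPsum : ∑ ω, P ω = 1)
    (ψ0 ψ0ν : EuclideanSpace ℝ (Fin r) → EuclideanSpace ℝ (Fin n) →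
      EuclideanSpace ℝ (Fin m) → ℝ)
    (hψ0cont : Continuous fun p : EuclideanSpace ℝ (Fin r) × EuclideanSpace ℝ (Fin n) ×
      EuclideanSpace ℝ (Fin m) => ψ0 p.1 p.2.1 p.2.2)
    (hψ0νcont : Continuous fun p : EuclideanSpace ℝ (Fin r) × EuclideanSpace ℝ (Fin n) ×
      EuclideanSpace ℝ (Fin m) => ψ0ν p.1 p.2.1 p.2.2)
    (C : Set (EuclideanSpace ℝ (Fin n) × EuclideanSpace ℝ (Fin m)))
    (hCne : C.Nonempty) (hCcl : IsClosed C)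
    (hCbin : ∀ p ∈ C, ∀ i, p.2 i = 0 ∨ p.2 i = 1)
    (Ξ : Set (EuclideanSpace ℝ (Fin r))) (hΞcomp : IsCompact Ξ)
    (ξν : Ω → EuclideanSpace ℝ (Fin r)) (hξν : ∀ ω, ξν ω ∈ Ξ)
    (ℱ : Set (EuclideanSpace ℝ (Fin r) → EuclideanSpace ℝ (Fin n)))
    (𝒢 : Set (EuclideanSpace ℝ (Fin r) → EuclideanSpace ℝ (Fin m)))
    (hℱcont : ∀ F ∈ ℱ, ContinuousOn F Ξ) (h𝒢cont : ∀ G ∈ 𝒢, ContinuousOn G Ξ)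
    -- (a) ℛ₀ real-valued, monotone, convex
    (R0 : (Ω → ℝ) → ℝ)
    (hR0const : ∀ c : ℝ, R0 (fun _ => c) = c)
    (hR0mono : ∀ η η' : Ω → ℝ, (∀ ω, η ω ≤ η' ω) → R0 η ≤ R0 η')
    (hR0convex : ∀ l : ℝ, 0 ≤ l → l ≤ 1 → ∀ η η' : Ω → ℝ,
      R0 (fun ω => (1 - l) * η ω + l * η' ω) ≤ (1 - l) * R0 η + l * R0 η')
    -- (b) regularizer vanishes on constant mappings
    (hν : (EuclideanSpace ℝ (Fin r) → EuclideanSpace ℝ (Fin n)) →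
      (EuclideanSpace ℝ (Fin r) → EuclideanSpace ℝ (Fin m)) → ℝ)
    (hhν_nonneg : ∀ F G, 0 ≤ hν F G)
    (hhν_const : ∀ F G, (∀ ζ ∈ Ξ, ∀ ζ' ∈ Ξ, F ζ = F ζ') →
      (∀ ζ ∈ Ξ, ∀ ζ' ∈ Ξ, G ζ = G ζ') → hν F G = 0)
    (ε : ℝ) (hε : 0 < ε)
    (δ δν : EReal) (hδ : (ε : EReal) < δ) (hδν : (ε : EReal) < δν)
    -- (c) Lipschitz and approximation bounds
    (σν κ0 : ℝ) (hσν : 0 ≤ σν) (hκ0 : 0 ≤ κ0)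
    (hLip : ∀ x y, (x, y) ∈ C → ∀ ξ ∈ Ξ, ∀ ξ' ∈ Ξ,
      |ψ0 ξ x y - ψ0 ξ' x y| ≤ κ0 * dist ξ ξ')
    (happrox : ∀ x y, (x, y) ∈ C → ∀ ξ ∈ Ξ, |ψ0ν ξ x y - ψ0 ξ x y| ≤ σν)
    -- (d) translation closure and zero mappings
    (hshiftF : ∀ F ∈ ℱ, ∀ a : EuclideanSpace ℝ (Fin n), (fun ζ => F ζ + a) ∈ ℱ)
    (hshiftG : ∀ G ∈ 𝒢, ∀ b : EuclideanSpace ℝ (Fin m), (fun ζ => G ζ + b) ∈ 𝒢)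
    (hzeroF : (fun _ => (0 : EuclideanSpace ℝ (Fin n))) ∈ ℱ)
    (hzeroG : (fun _ => (0 : EuclideanSpace ℝ (Fin m))) ∈ 𝒢)
    -- (F^ν,G^ν) is a τ^ν-minimizer of (TP)^ν without risk constraints
    (τν : ℝ) (hτν : 0 ≤ τν)
    (Fν : EuclideanSpace ℝ (Fin r) → EuclideanSpace ℝ (Fin n))
    (Gν : EuclideanSpace ℝ (Fin r) → EuclideanSpace ℝ (Fin m))
    (hFνmem : Fν ∈ ℱ) (hGνmem : Gν ∈ 𝒢)
    (hνC : ∀ ω, (Fν (ξν ω), Heav (Gν (ξν ω))) ∈ C)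
    (hνD : ∀ ω, Gν (ξν ω) ∈ Dset m ε δν)
    (hnearmin : ∀ F ∈ ℱ, ∀ G ∈ 𝒢,
      (∀ ω, (F (ξν ω), Heav (G (ξν ω))) ∈ C) →
      (∀ ω, G (ξν ω) ∈ Dset m ε δν) →
      R0 (fun ω => ψ0ν (ξν ω) (Fν (ξν ω)) (Heav (Gν (ξν ω)))) + hν Fν Gν ≤
        R0 (fun ω => ψ0ν (ξν ω) (F (ξν ω)) (Heav (G (ξν ω)))) + hν F G + τν)
    -- additional Lipschitz data for F^ν and ψ₀
    (lam κ0' : ℝ) (hlam : 0 ≤ lam) (hκ0' : 0 ≤ κ0')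
    (hFνlip : ∀ ξ'' ∈ Ξ, ∀ ξ' ∈ Ξ, dist (Fν ξ'') (Fν ξ') ≤ lam * dist ξ'' ξ')
    (hψ0lip : ∀ ξ'' ∈ Ξ, ∀ ξ' ∈ Ξ, ∀ x'' x' y, (x'', y) ∈ C → (x', y) ∈ C →
      |ψ0 ξ'' x'' y - ψ0 ξ' x' y| ≤ κ0' * Real.sqrt (dist ξ'' ξ' ^ 2 + dist x'' x' ^ 2)) :
    ∀ ξ ∈ Ξ, (Fν ξ, Heav (Gν ξ)) ∈ C → (∀ ω, Heav (Gν ξ) = Heav (Gν (ξν ω))) →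
      BddBelow {v : ℝ | ∃ x y, (x, y) ∈ C ∧ v = ψ0 ξ x y} ∧
      ψ0 ξ (Fν ξ) (Heav (Gν ξ)) ≤
        sInf {v : ℝ | ∃ x y, (x, y) ∈ C ∧ v = ψ0 ξ x y} +
          (2 * σν + τν + (κ0 + κ0' * Real.sqrt (1 + lam ^ 2)) * Metric.diam Ξ) := by
  classical
  intro ξ hξ hξC hHeq
  set H := Heav (Gν ξ) with hH
  set D := Metric.diam Ξ with hD
  have hDnn : 0 ≤ D := Metric.diam_nonneg
  have hdle : ∀ ω, dist ξ (ξν ω) ≤ D := fun ω =>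
    Metric.dist_le_diam_of_mem hΞcomp.isBounded hξ (hξν ω)
  set A := κ0' * (Real.sqrt (1 + lam ^ 2) * D) with hA
  have key : ∀ x y, (x, y) ∈ C →
      ψ0 ξ (Fν ξ) H ≤ ψ0 ξ x y +
        (2 * σν + τν + (κ0 + κ0' * Real.sqrt (1 + lam ^ 2)) * D) := by
    intro x y hxy
    have hy01 : ∀ i, y i = 0 ∨ y i = 1 := hCbin (x, y) hxy
    set b : EuclideanSpace ℝ (Fin m) := WithLp.toLp 2 (fun i => if y i = 0 then -ε else ε) with hb
    have hHb : Heav b = y := by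
      ext i
      rcases hy01 i with h0 | h1
      · have : b i = -ε := by simp [hb, h0]
        simp [Heav, this, neg_nonpos.2 hε.le, h0]
      · have hne : ¬ y i = 0 := by rw [h1]; norm_num
        have : b i = ε := by simp [hb, hne]
        simp [Heav, this, not_le.2 hε, h1]
    have hFbar : (fun _ : EuclideanSpace ℝ (Fin r) => x) ∈ ℱ := by
      have := hshiftF _ hzeroF x; simpa using this
    have hGbar : (fun _ : EuclideanSpace ℝ (Fin r) => b) ∈ 𝒢 := by
      have := hshiftG _ hzeroG b; simpa using this
    have hbD : b ∈ Dset m ε δν := by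
      intro i
      have habs : |b i| = ε := by
        rcases hy01 i with h0 | h1
        · have : b i = -ε := by simp [hb, h0]
          rw [this, abs_neg, abs_of_pos hε]
        · have hne : ¬ y i = 0 := by rw [h1]; norm_num
          have : b i = ε := by simp [hb, hne]
          rw [this, abs_of_pos hε]
      rw [habs]
      exact ⟨le_refl _, le_of_lt hδν⟩
    have hnm := hnearmin _ hFbar _ hGbar
      (fun ω => by rw [hHb]; exact hxy) (fun ω => hbD)
    have hhconst : hν (fun _ => x) (fun _ => b) = 0 :=
      hhν_const _ _ (fun _ _ _ _ => rfl) (fun _ _ _ _ => rfl)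
    rw [hhconst] at hnm
    simp only [hHb] at hnm
    have hnm' : R0 (fun ω => ψ0ν (ξν ω) (Fν (ξν ω)) (Heav (Gν (ξν ω)))) ≤
        R0 (fun ω => ψ0ν (ξν ω) x y) + τν := by
      have := hhν_nonneg Fν Gν; linarith
    have hlow : ∀ ω, ψ0 ξ (Fν ξ) H - σν - A ≤
        ψ0ν (ξν ω) (Fν (ξν ω)) (Heav (Gν (ξν ω))) := by
      intro ω
      have h1 := happrox _ _ (hνC ω) _ (hξν ω)
      have hC2 : (Fν (ξν ω), H) ∈ C := by rw [hHeq ω]; exact hνC ω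
      have h2 := hψ0lip ξ hξ (ξν ω) (hξν ω) (Fν ξ) (Fν (ξν ω)) H hξC hC2
      have he : dist (Fν ξ) (Fν (ξν ω)) ≤ lam * dist ξ (ξν ω) :=
        hFνlip ξ hξ (ξν ω) (hξν ω)
      have hdnn : (0:ℝ) ≤ dist ξ (ξν ω) := dist_nonneg
      have hsq : Real.sqrt (dist ξ (ξν ω) ^ 2 + dist (Fν ξ) (Fν (ξν ω)) ^ 2) ≤
          Real.sqrt (1 + lam ^ 2) * D := by
        have h5 : dist ξ (ξν ω) ^ 2 + dist (Fν ξ) (Fν (ξν ω)) ^ 2 ≤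
            (1 + lam ^ 2) * dist ξ (ξν ω) ^ 2 := by
          nlinarith [dist_nonneg (x := Fν ξ) (y := Fν (ξν ω))]
        calc Real.sqrt (dist ξ (ξν ω) ^ 2 + dist (Fν ξ) (Fν (ξν ω)) ^ 2)
            ≤ Real.sqrt ((1 + lam ^ 2) * dist ξ (ξν ω) ^ 2) := Real.sqrt_le_sqrt h5
          _ = Real.sqrt (1 + lam ^ 2) * dist ξ (ξν ω) := by
              rw [Real.sqrt_mul (by positivity), Real.sqrt_sq hdnn]
          _ ≤ Real.sqrt (1 + lam ^ 2) * D :=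
              mul_le_mul_of_nonneg_left (hdle ω) (Real.sqrt_nonneg _)
      have h2' : |ψ0 ξ (Fν ξ) H - ψ0 (ξν ω) (Fν (ξν ω)) H| ≤ A :=
        h2.trans (by rw [hA]; exact mul_le_mul_of_nonneg_left hsq hκ0')
      rw [hHeq ω] at h2'
      have e1 := (abs_le.1 h1).1
      have e2 := (abs_le.1 h2').2
      rw [hHeq ω]
      linarith
    have hup : ∀ ω, ψ0ν (ξν ω) x y ≤ ψ0 ξ x y + σν + κ0 * D := by
      intro ω
      have h3 := hLip x y hxy (ξν ω) (hξν ω) ξ hξ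
      have h4 := happrox x y hxy (ξν ω) (hξν ω)
      have hdc : dist (ξν ω) ξ ≤ D := by rw [dist_comm]; exact hdle ω
      have h3' : κ0 * dist (ξν ω) ξ ≤ κ0 * D := mul_le_mul_of_nonneg_left hdc hκ0
      have e3 := (abs_le.1 h3).2
      have e4 := (abs_le.1 h4).2
      linarith
    have hL := hR0mono (fun _ => ψ0 ξ (Fν ξ) H - σν - A) _ hlow
    have hU := hR0mono _ (fun _ => ψ0 ξ x y + σν + κ0 * D) hup
    rw [hR0const] at hL hU
    have hexp : (κ0 + κ0' * Real.sqrt (1 + lam ^ 2)) * D = κ0 * D + A := by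
      rw [hA]; ring
    linarith
  obtain ⟨⟨x₀, y₀⟩, hxy₀⟩ := hCne
  have hne : {v : ℝ | ∃ x y, (x, y) ∈ C ∧ v = ψ0 ξ x y}.Nonempty :=
    ⟨ψ0 ξ x₀ y₀, x₀, y₀, hxy₀, rfl⟩
  have hlb : ∀ v ∈ {v : ℝ | ∃ x y, (x, y) ∈ C ∧ v = ψ0 ξ x y},
      ψ0 ξ (Fν ξ) H - (2 * σν + τν + (κ0 + κ0' * Real.sqrt (1 + lam ^ 2)) * D) ≤ v := by
    rintro v ⟨x, y, hxy, rfl⟩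
    have := key x y hxy
    linarith
  refine ⟨⟨_, hlb⟩, ?_⟩
  have := le_csInf hne hlb
  linarith
end
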